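/- Let (τ, T, ≤) be a weak stability condition on the abelian category 𝒜 with respect to cl, and suppose 𝒜 is τ-artinian. Then every nonzero object B of 𝒜 has a nonzero subobject A ⊆ B such that A is τ-semistable and τ(cl A) ≥ τ(cl B). -/

import Mathlib

open CategoryTheory CategoryTheory.Limits

namespace JoyceIII

universe u v

variable {𝒜 : Type u} [Category.{v} 𝒜] [Abelian 𝒜]
variable {K : Type*} [AddCommGroup K] {T : Type*} [LinearOrder T]

/-- `α ∈ C(𝒜)`: `α` is the class of some nonzero object of `𝒜`. -/
def InC (cl : 𝒜 → K) (α : K) : Prop := ∃ X : 𝒜, ¬ IsZero X ∧ cl X = α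

/-- `cl` is additive on short exact sequences: `cl Y = cl X + cl Z` for every
short exact sequence `0 → X → Y → Z → 0`. -/
def ClAdditive (cl : 𝒜 → K) : Prop :=
  ∀ S : ShortComplex 𝒜, S.ShortExact → cl S.X₂ = cl S.X₁ + cl S.X₃

/-- `cl X = 0` implies `X ≅ 0`. -/
def ClNondeg (cl : 𝒜 → K) : Prop := ∀ X : 𝒜, cl X = 0 → IsZero X

/-- `(τ, T, ≤)` is a weak stability condition: the weak seesaw inequality holds. -/
def IsWeakStability (cl : 𝒜 → K) (τ : K → T) : Prop :=
  ∀ α β γ : K, InC cl α → InC cl β → InC cl γ → β = α + γ →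
    (τ α ≤ τ β ∧ τ β ≤ τ γ) ∨ (τ γ ≤ τ β ∧ τ β ≤ τ α)

/-- `(τ, T, ≤)` is a stability condition: the seesaw inequality holds. -/
def IsStability (cl : 𝒜 → K) (τ : K → T) : Prop :=
  ∀ α β γ : K, InC cl α → InC cl β → InC cl γ → β = α + γ →
    (τ α < τ β ∧ τ β < τ γ) ∨ (τ γ < τ β ∧ τ β < τ α) ∨ (τ α = τ β ∧ τ β = τ γ)

/-- The quotient object `X/S` of `X` by a subobject `S`, i.e. the cokernel of
the inclusion `S → X`. -/
noncomputable def quotBySub {X : 𝒜} (S : Subobject X) : 𝒜 := cokernel S.arrow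

/-- The quotient `B / A` of subobjects `A ≤ B` of `X` (implemented as the
cokernel of the inclusion `A ⊓ B → B`, which agrees with `B / A` when `A ≤ B`). -/
noncomputable def subQuot {X : 𝒜} (A B : Subobject X) : 𝒜 :=
  cokernel (Subobject.ofLE (A ⊓ B) B inf_le_right)

/-- `X` is `τ`-semistable: `X` is nonzero and every subobject `S ⊆ X` with
`S ≇ 0`, `S ≠ X` satisfies `τ(cl S) ≤ τ(cl (X/S))`. -/
def Semistable (cl : 𝒜 → K) (τ : K → T) (X : 𝒜) : Prop :=
  ¬ IsZero X ∧ ∀ S : Subobject X, ¬ IsZero ((S : 𝒜)) → S ≠ ⊤ →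
    τ (cl ((S : 𝒜))) ≤ τ (cl (quotBySub S))

/-- `X` is `τ`-stable: `X` is nonzero and every subobject `S ⊆ X` with
`S ≇ 0`, `S ≠ X` satisfies `τ(cl S) < τ(cl (X/S))`. -/
def Stable (cl : 𝒜 → K) (τ : K → T) (X : 𝒜) : Prop :=
  ¬ IsZero X ∧ ∀ S : Subobject X, ¬ IsZero ((S : 𝒜)) → S ≠ ⊤ →
    τ (cl ((S : 𝒜))) < τ (cl (quotBySub S))

/-- `𝒜` is noetherian: all ascending chains of subobjects stabilize. -/
def CatNoetherian (ℬ : Type u) [Category.{v} ℬ] [Abelian ℬ] : Prop :=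
  ∀ (X : ℬ) (A : ℕ → Subobject X), (∀ n, A n ≤ A (n + 1)) →
    ∃ N, ∀ n, N ≤ n → A n = A N

/-- `𝒜` is `τ`-artinian: there is no infinite chain of subobjects
`⋯ ⊆ A₂ ⊆ A₁ ⊆ X` with `A (n+1) ≠ A n` and `τ(cl A (n+1)) ≥ τ(cl (A n / A (n+1)))`. -/
def TauArtinian (cl : 𝒜 → K) (τ : K → T) : Prop :=
  ¬ ∃ (X : 𝒜) (A : ℕ → Subobject X),
      (∀ n, A (n + 1) ≤ A n) ∧ (∀ n, A (n + 1) ≠ A n) ∧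
      ∀ n, τ (cl (subQuot (A (n + 1)) (A n))) ≤ τ (cl ((A (n + 1) : 𝒜)))


open ZeroObject in
lemma cl_of_isZero {cl : 𝒜 → K} (hadd : ClAdditive cl) {X : 𝒜} (hX : IsZero X) :
    cl X = 0 := by
  have h : (ShortComplex.mk (𝟙 X) (𝟙 X) (by rw [hX.eq_of_src (𝟙 X ≫ 𝟙 X) 0])).ShortExact :=
    ⟨ShortComplex.exact_of_isZero_X₂ _ hX⟩
  have h2 := hadd _ h
  simp only [] at h2
  have h3 : cl X + cl X = cl X + 0 := by rw [add_zero]; exact h2.symm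
  exact add_left_cancel h3

open ZeroObject in
lemma cl_iso {cl : 𝒜 → K} (hadd : ClAdditive cl) {X Y : 𝒜} (e : X ≅ Y) :
    cl X = cl Y := by
  have hm : Mono (0 : (0 : 𝒜) ⟶ X) := ⟨fun u v _ => (isZero_zero 𝒜).eq_of_tgt u v⟩
  have hse : (ShortComplex.mk (0 : (0 : 𝒜) ⟶ X) e.hom zero_comp).ShortExact :=
    ⟨(ShortComplex.exact_iff_mono _ rfl).2 inferInstance⟩
  have h2 := hadd _ hse
  simpa [cl_of_isZero hadd (isZero_zero 𝒜)] using h2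

lemma cl_sub_add {cl : 𝒜 → K} (hadd : ClAdditive cl) {X : 𝒜} (S : Subobject X) :
    cl X = cl ((S : 𝒜)) + cl (quotBySub S) :=
  hadd _ ⟨ShortComplex.exact_cokernel _⟩

lemma quot_nonzero {X : 𝒜} {S : Subobject X} (h : S ≠ ⊤) : ¬ IsZero (quotBySub S) := by
  intro hz
  have : Epi S.arrow := Preadditive.epi_of_isZero_cokernel _ hz
  have : IsIso S.arrow := isIso_of_mono_of_epi _
  exact h ((Subobject.isIso_arrow_iff_eq_top S).1 this)

/-- The pushforward of a subobject `S ⊆ A` to a subobject of `B`. -/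
@[reducible] noncomputable def pushSub {B : 𝒜} (A : Subobject B) (S : Subobject (A : 𝒜)) :
    Subobject B := Subobject.mk (S.arrow ≫ A.arrow)

omit [Abelian 𝒜] in
lemma pushSub_le {B : 𝒜} (A : Subobject B) (S : Subobject (A : 𝒜)) :
    pushSub A S ≤ A := by
  have := Subobject.mk_le_mk_of_comm (f₁ := S.arrow ≫ A.arrow) (f₂ := A.arrow) S.arrow rfl
  simpa [pushSub, Subobject.mk_arrow] using this

noncomputable def pushSubIso {B : 𝒜} (A : Subobject B) (S : Subobject (A : 𝒜)) :
    ((pushSub A S : 𝒜)) ≅ ((S : 𝒜)) :=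
  Subobject.underlyingIso (S.arrow ≫ A.arrow)

omit [Abelian 𝒜] in
lemma pushSub_ne {B : 𝒜} (A : Subobject B) (S : Subobject (A : 𝒜)) (hS : S ≠ ⊤) :
    pushSub A S ≠ A := by
  intro h
  have harr : (Subobject.underlyingIso (S.arrow ≫ A.arrow)).inv ≫
      (Subobject.isoOfEq _ _ h).hom ≫ A.arrow = S.arrow ≫ A.arrow := by
    rw [Subobject.isoOfEq_hom, Subobject.ofLE_arrow]
    exact Subobject.underlyingIso_arrow _
  have hS' : S.arrow = (Subobject.underlyingIso (S.arrow ≫ A.arrow)).inv ≫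
      (Subobject.isoOfEq _ _ h).hom := by
    apply (cancel_mono A.arrow).1
    simpa using harr.symm
  have : IsIso S.arrow := by rw [hS']; infer_instance
  exact hS ((Subobject.isIso_arrow_iff_eq_top S).1 this)

noncomputable def pushSubQuotIso {B : 𝒜} (A : Subobject B) (S : Subobject (A : 𝒜)) :
    subQuot (pushSub A S) A ≅ quotBySub S := by
  refine cokernel.mapIso _ S.arrow
    ((Subobject.isoOfEq _ _ (inf_of_le_left (pushSub_le A S))) ≪≫ pushSubIso A S)
    (Iso.refl _) ?_
  apply (cancel_mono A.arrow).1
  simp only [Iso.trans_hom, Category.assoc, Iso.refl_hom, Category.comp_id,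
    Subobject.ofLE_arrow, pushSubIso]
  rw [Subobject.underlyingIso_hom_comp_eq_mk]
  show (pushSub A S ⊓ A).arrow = (Subobject.isoOfEq _ _ _).hom ≫ (pushSub A S).arrow
  rw [Subobject.isoOfEq_hom, Subobject.ofLE_arrow]

/-- **Step 1 of the proof of Theorem 4.4.** If `𝒜` is `τ`-artinian, every
nonzero object `B` has a nonzero `τ`-semistable subobject `A ⊆ B` with
`τ(cl A) ≥ τ(cl B)`. -/
theorem exists_semistable_subobject (cl : 𝒜 → K) (τ : K → T)
    (hadd : ClAdditive cl) (hnd : ClNondeg cl)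
    (hwsc : IsWeakStability cl τ) (hart : TauArtinian cl τ)
    (B : 𝒜) (hB : ¬ IsZero B) :
    ∃ A : Subobject B, ¬ IsZero ((A : 𝒜)) ∧ Semistable cl τ ((A : 𝒜)) ∧
      τ (cl B) ≤ τ (cl ((A : 𝒜))) := by
  by_contra hcon
  push_neg at hcon
  set good : Subobject B → Prop :=
    fun A => ¬ IsZero ((A : 𝒜)) ∧ τ (cl B) ≤ τ (cl ((A : 𝒜))) with hgood
  have key : ∀ A : Subobject B, good A → ∃ A' : Subobject B, good A' ∧ A' ≤ A ∧ A' ≠ A ∧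
      τ (cl (subQuot A' A)) ≤ τ (cl ((A' : 𝒜))) := by
    rintro A ⟨hAnz, hAτ⟩
    have hnss : ¬ Semistable cl τ ((A : 𝒜)) :=
      fun hss => absurd hAτ (not_le.2 (hcon A hAnz hss))
    rw [Semistable] at hnss
    push_neg at hnss
    obtain ⟨S, hSnz, hSne, hSlt⟩ := hnss hAnz
    have hadd' := cl_sub_add hadd S
    have hQnz : ¬ IsZero (quotBySub S) := quot_nonzero hSne
    have hsee := hwsc (cl ((S : 𝒜))) (cl ((A : 𝒜))) (cl (quotBySub S))
      ⟨_, hSnz, rfl⟩ ⟨_, hAnz, rfl⟩ ⟨_, hQnz, rfl⟩ hadd'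
    have hge : τ (cl ((A : 𝒜))) ≤ τ (cl ((S : 𝒜))) := by
      rcases hsee with ⟨h1, h2⟩ | ⟨_, h2⟩
      · exact absurd (h1.trans h2) (not_le.2 hSlt)
      · exact h2
    refine ⟨pushSub A S, ⟨?_, ?_⟩, pushSub_le A S, pushSub_ne A S hSne, ?_⟩
    · intro hz
      exact hSnz (hz.of_iso (pushSubIso A S).symm)
    · rw [cl_iso hadd (pushSubIso A S)]
      exact hAτ.trans hge
    · rw [cl_iso hadd (pushSubIso A S), cl_iso hadd (pushSubQuotIso A S)]
      exact le_of_lt hSlt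
  choose f h1 h2 h3 h4 using key
  have hgoodtop : good (⊤ : Subobject B) := by
    constructor
    · intro hz
      exact hB (hz.of_iso (asIso ((⊤ : Subobject B).arrow)).symm)
    · rw [cl_iso hadd (asIso ((⊤ : Subobject B).arrow))]
  let next : {A : Subobject B // good A} → {A : Subobject B // good A} :=
    fun a => ⟨f a.1 a.2, h1 a.1 a.2⟩
  let seq : ℕ → {A : Subobject B // good A} := fun n => next^[n] ⟨⊤, hgoodtop⟩
  have hseq : ∀ n, seq (n + 1) = next (seq n) := by
    intro n
    simp only [seq, Function.iterate_succ_apply']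
  refine hart ⟨B, fun n => (seq n).1, ?_, ?_, ?_⟩
  · intro n
    show (seq (n + 1)).1 ≤ (seq n).1
    rw [hseq n]
    exact h2 (seq n).1 (seq n).2
  · intro n
    show (seq (n + 1)).1 ≠ (seq n).1
    rw [hseq n]
    exact h3 (seq n).1 (seq n).2
  · intro n
    show τ (cl (subQuot ((seq (n + 1)).1) ((seq n).1))) ≤ τ (cl (((seq (n + 1)).1 : 𝒜)))
    rw [hseq n]
    exact h4 (seq n).1 (seq n).2


end JoyceIII
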